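/- Let s ∈ ℕ, let V be a finite-dimensional normed complex vector space, let L : (ℂ²)^{⊗s} →ₗ[ℂ] V be a linear map, and let f_j : ℝ → ℂ (j = 1,…,s) each be differentiable at θ₀ ∈ ℝ. Define linear maps B_j : ℂ² →ₗ[ℂ] ℂ² by B_j(e₀) = e₀ + f_j(θ₀)·e₁ and B_j(e₁) = f_j'(θ₀)·e₁. Then the function θ ↦ L(⊗_{j=1}^s (e₀ + f_j(θ)·e₁)) is differentiable at θ₀ and its derivative equals L((B_1 ⊗ ⋯ ⊗ B_s)(w_s)). Equivalently, the derivative equals Σ_{j=1}^s f_j'(θ₀) · L(v_1 ⊗ ⋯ ⊗ v_s) where v_j = e₁ and v_l = e₀ + f_l(θ₀)·e₁ for l ≠ j. (This is the single-diagram product rule for differentiating an arbitrary algebraic ZX diagram, packaged by a W spider.) -/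

import Mathlib

open scoped TensorProduct

noncomputable section

/-- `ℂ²` with standard basis vectors. -/
abbrev C2 : Type := ℂ × ℂ

def e0 : C2 := (1, 0)
def e1 : C2 := (0, 1)

/-- The unnormalized `s`-legged W state `w_s = ∑_j e₀ ⊗ ⋯ ⊗ e₁ ⊗ ⋯ ⊗ e₀`
(with `e₁` in the `j`-th factor). -/
def wState (s : ℕ) : ⨂[ℂ] _ : Fin s, C2 :=
  ∑ j : Fin s, ⨂ₜ[ℂ] l, (if l = j then e1 else e0)

lemma C2_decomp (v : C2) : v = v.1 • e0 + v.2 • e1 := by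
  simp [e0, e1, Prod.ext_iff]

/-- single-diagram product rule for differentiating an arbitrary
algebraic ZX diagram, packaged by a W spider. -/
theorem deriv_algebraic_zx_diagram (s : ℕ) (V : Type*) [NormedAddCommGroup V]
    [NormedSpace ℂ V] [FiniteDimensional ℂ V]
    (L : (⨂[ℂ] _ : Fin s, C2) →ₗ[ℂ] V)
    (f : Fin s → ℝ → ℂ) (f' : Fin s → ℂ) (θ₀ : ℝ)
    (hf : ∀ j, HasDerivAt (f j) (f' j) θ₀)
    (B : Fin s → C2 →ₗ[ℂ] C2)
    (hB0 : ∀ j, B j e0 = e0 + f j θ₀ • e1)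
    (hB1 : ∀ j, B j e1 = f' j • e1) :
    HasDerivAt (fun θ : ℝ => L (⨂ₜ[ℂ] j, (e0 + f j θ • e1)))
        (L (PiTensorProduct.map B (wState s))) θ₀ ∧
      L (PiTensorProduct.map B (wState s)) =
        ∑ j : Fin s, f' j • L (⨂ₜ[ℂ] l, (if l = j then e1 else e0 + f l θ₀ • e1)) := by
  classical
  set Mraw : MultilinearMap ℂ (fun _ : Fin s => C2) V :=
    L.compMultilinearMap (PiTensorProduct.tprod ℂ) with hMraw
  -- expansion of Mraw over the basis
  have hexp : ∀ m : Fin s → C2,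
      Mraw m = ∑ r : Fin s → Bool,
        (∏ j, (if r j then (m j).2 else (m j).1)) •
          Mraw (fun j => if r j then e1 else e0) := by
    intro m
    have h1 : Mraw m = Mraw (fun j => ∑ b : Bool,
        (if b then (m j).2 else (m j).1) • (if b then e1 else e0)) := by
      congr 1; funext j
      simp only [Fintype.sum_bool, if_true, if_false]
      rw [add_comm]; exact C2_decomp (m j)
    rw [h1, MultilinearMap.map_sum]
    refine Finset.sum_congr rfl fun r _ => ?_
    rw [← MultilinearMap.map_smul_univ]
  set C : ℝ := ∑ r : Fin s → Bool, ‖Mraw (fun j => if r j then e1 else e0)‖ with hC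
  have hbound : ∀ m : Fin s → C2, ‖Mraw m‖ ≤ C * ∏ j, ‖m j‖ := by
    intro m
    rw [hexp m, hC, Finset.sum_mul]
    refine (norm_sum_le _ _).trans (Finset.sum_le_sum fun r _ => ?_)
    rw [norm_smul]
    rw [mul_comm (‖Mraw fun j => if r j then e1 else e0‖) _]
    refine mul_le_mul_of_nonneg_right ?_ (norm_nonneg _)
    rw [norm_prod]
    refine Finset.prod_le_prod (fun j _ => norm_nonneg _) fun j _ => ?_
    by_cases h : r j <;>
      simp only [h, if_true, if_false] <;>
      [exact norm_snd_le (m j); exact norm_fst_le (m j)]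
  set M : ContinuousMultilinearMap ℂ (fun _ : Fin s => C2) V :=
    Mraw.mkContinuous C hbound with hM
  have hMapp : ∀ m : Fin s → C2, M m = L ((PiTensorProduct.tprod ℂ) m) := fun m => rfl
  set x : Fin s → C2 := fun j => e0 + f j θ₀ • e1 with hx
  -- the curve
  have hg : HasDerivAt (fun θ : ℝ => fun j : Fin s => e0 + f j θ • e1)
      (fun j => f' j • e1) θ₀ := by
    rw [hasDerivAt_pi]
    intro j
    exact ((hf j).smul_const e1).const_add e0
  -- derivative of M along curve
  have hFD : HasFDerivAt (⇑M) ((M.linearDeriv x).restrictScalars ℝ) x :=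
    (M.hasFDerivAt (x := x)).restrictScalars ℝ
  have hD : HasDerivAt (fun θ : ℝ => M (fun j => e0 + f j θ • e1))
      (M.linearDeriv x (fun j => f' j • e1)) θ₀ := by
    exact hFD.comp_hasDerivAt θ₀ hg
  -- the common value
  have hval : (M.linearDeriv x (fun j => f' j • e1)) =
      ∑ j : Fin s, f' j • L (⨂ₜ[ℂ] l, (if l = j then e1 else e0 + f l θ₀ • e1)) := by
    rw [ContinuousMultilinearMap.linearDeriv_apply]
    refine Finset.sum_congr rfl fun j _ => ?_
    have h1 : M (Function.update x j (f' j • e1)) = f' j • M (Function.update x j e1) :=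
      M.toMultilinearMap.map_update_smul x j (f' j) e1
    rw [h1]
    congr 1
    rw [hMapp]
    have hupd : Function.update x j e1 =
        fun l : Fin s => if l = j then e1 else e0 + f l θ₀ • e1 := by
      funext l
      rw [Function.update_apply]
    rw [hupd]
  -- key: L (map B (wState s)) equals the sum
  have hkey : L (PiTensorProduct.map B (wState s)) =
      ∑ j : Fin s, f' j • L (⨂ₜ[ℂ] l, (if l = j then e1 else e0 + f l θ₀ • e1)) := by
    rw [wState, map_sum, map_sum]
    refine Finset.sum_congr rfl fun j _ => ?_
    rw [PiTensorProduct.map_tprod]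
    have h1 : (fun l => B l (if l = j then e1 else e0)) =
        Function.update (fun l : Fin s => if l = j then e1 else e0 + f l θ₀ • e1) j
          (f' j • e1) := by
      funext l
      rw [Function.update_apply]
      by_cases h : l = j
      · simp [h, hB1]
      · simp [h, hB0]
    rw [h1]
    have h2 := (PiTensorProduct.tprod ℂ (s := fun _ : Fin s => C2)).map_update_smul
      (fun l : Fin s => if l = j then e1 else e0 + f l θ₀ • e1) j (f' j) e1
    have h3 : Function.update (fun l : Fin s => if l = j then e1 else e0 + f l θ₀ • e1) j e1 =
        fun l : Fin s => if l = j then e1 else e0 + f l θ₀ • e1 := by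
      funext l
      rw [Function.update_apply]
      by_cases h : l = j <;> simp [h]
    rw [h2, h3, map_smul]
  refine ⟨?_, hkey⟩
  have : (fun θ : ℝ => L (⨂ₜ[ℂ] j, (e0 + f j θ • e1))) =
      fun θ : ℝ => M (fun j => e0 + f j θ • e1) := by
    funext θ; rw [hMapp]
  rw [this, hkey, ← hval]
  exact hD
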